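/- Let f, g, m : I → R be differentiable functions with f and g nowhere zero, and let γ(t) = (f + m·g, g − m·f, f − m·g, g + m·f). If γ is a null curve in E⁴₂, i.e., ⟨γ',γ'⟩ = 0 pointwise (where ⟨x,y⟩ = x1y1 + x2y2 − x3y3 − x4y4 and note ⟨γ,γ⟩ = 0 automatically), then (fg' − f'g)(1 + m²)(f² + g²)·m' = 0 pointwise; in particular, if fg' − f'g is nowhere zero, then m' ≡ 0, i.e., m is constant. -/

import Mathlib

theorem null_curve_m_constant (f g m : ℝ → ℝ)
    (hf : Differentiable ℝ f) (hg : Differentiable ℝ g) (hm : Differentiable ℝ m)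
    (hf0 : ∀ t, f t ≠ 0) (hg0 : ∀ t, g t ≠ 0)
    (γ1 γ2 γ3 γ4 : ℝ → ℝ)
    (hγ1 : γ1 = fun t => f t + m t * g t) (hγ2 : γ2 = fun t => g t - m t * f t)
    (hγ3 : γ3 = fun t => f t - m t * g t) (hγ4 : γ4 = fun t => g t + m t * f t)
    (hnulltan : ∀ t, deriv γ1 t ^ 2 + deriv γ2 t ^ 2
        - deriv γ3 t ^ 2 - deriv γ4 t ^ 2 = 0) :
    (∀ t, (f t * deriv g t - deriv f t * g t) * (1 + m t ^ 2)
        * (f t ^ 2 + g t ^ 2) * deriv m t = 0) ∧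
    ((∀ t, f t * deriv g t - deriv f t * g t ≠ 0) → ∀ t, deriv m t = 0) := by
  have key : ∀ t, (f t * deriv g t - deriv f t * g t) * deriv m t = 0 := by
    intro t
    have h := hnulltan t
    have d1 : deriv γ1 t = deriv f t + (deriv m t * g t + m t * deriv g t) := by
      rw [hγ1, deriv_fun_add (g := fun y => m y * g y) (hf t) ((hm t).mul (hg t)), deriv_fun_mul (hm t) (hg t)]
    have d2 : deriv γ2 t = deriv g t - (deriv m t * f t + m t * deriv f t) := by
      rw [hγ2, deriv_fun_sub (g := fun y => m y * f y) (hg t) ((hm t).mul (hf t)), deriv_fun_mul (hm t) (hf t)]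
    have d3 : deriv γ3 t = deriv f t - (deriv m t * g t + m t * deriv g t) := by
      rw [hγ3, deriv_fun_sub (g := fun y => m y * g y) (hf t) ((hm t).mul (hg t)), deriv_fun_mul (hm t) (hg t)]
    have d4 : deriv γ4 t = deriv g t + (deriv m t * f t + m t * deriv f t) := by
      rw [hγ4, deriv_fun_add (g := fun y => m y * f y) (hg t) ((hm t).mul (hf t)), deriv_fun_mul (hm t) (hf t)]
    rw [d1, d2, d3, d4] at h
    linear_combination -h / 4
  constructor
  · intro t
    have := key t
    linear_combination ((1 + m t ^ 2) * (f t ^ 2 + g t ^ 2)) * this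
  · intro hne t
    have := key t
    exact (mul_eq_zero.mp this).resolve_left (hne t)
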